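/- Let m₁, m₂ ∈ ℝ, let e₁ := (1,0), and for q ∈ ℝ² \ {e₁, −e₁} and p ∈ ℝ² define L₊ := (q₁ − 1)p₂ − q₂p₁, L₋ := (q₁ + 1)p₂ − q₂p₁, and Ω(q,p) := L₊·L₋ − 2m₁(q₁ − 1)/‖q − e₁‖ + 2m₂(q₁ + 1)/‖q + e₁‖. Then: (i) for every twice-differentiable curve q : I → ℝ² \ {e₁, −e₁} satisfying the two-center equation q''(t) = −m₁·(q(t) − e₁)/‖q(t) − e₁‖³ − m₂·(q(t) + e₁)/‖q(t) + e₁‖³, the function t ↦ Ω(q(t), q'(t)) is constant; (ii) for every b > 0 and every point q on the confocal ellipse {q₁²/(b²+1) + q₂²/b² = 1}, the elastic reflection p' of any p ∈ ℝ² at this ellipse at q (with normal n = (q₁/(b²+1), q₂/b²)) satisfies Ω(q,p') = Ω(q,p); (iii) for all A, B > 0 with A² + B² = 1 and every point q ≠ ±e₁ on the confocal hyperbola {q₁²/A² − q₂²/B² = 1}, the elastic reflection p' of any p at this hyperbola at q (with normal n = (q₁/A², −q₂/B²)) satisfies Ω(q,p') = Ω(q,p). Hence Euler's two-center problem admits any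 combination of confocal ellipses and hyperbolae (with foci at the two centers (±1,0)) as an integrable reflection wall. -/

import Mathlib

/-- The first integral
`Ω(q,p) = L₊·L₋ − 2m₁(q₁−1)/‖q−e₁‖ + 2m₂(q₁+1)/‖q+e₁‖` of Euler's two-center
problem, where `L₊ = (q₁−1)p₂ − q₂p₁` and `L₋ = (q₁+1)p₂ − q₂p₁` are the angular
momenta about the two centers `(±1, 0)`. -/
noncomputable def twoCenterOmega (m₁ m₂ : ℝ) (q p : ℝ × ℝ) : ℝ :=
  ((q.1 - 1) * p.2 - q.2 * p.1) * ((q.1 + 1) * p.2 - q.2 * p.1)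
    - 2 * m₁ * (q.1 - 1) / Real.sqrt ((q.1 - 1) ^ 2 + q.2 ^ 2)
    + 2 * m₂ * (q.1 + 1) / Real.sqrt ((q.1 + 1) ^ 2 + q.2 ^ 2)

lemma fstDeriv {f : ℝ → ℝ × ℝ} {w : ℝ × ℝ} {I : Set ℝ} {t : ℝ}
    (h : HasDerivWithinAt f w I t) : HasDerivWithinAt (fun s => (f s).1) w.1 I t := by
  simpa using (h.hasFDerivWithinAt.fst).hasDerivWithinAt

lemma sndDeriv {f : ℝ → ℝ × ℝ} {w : ℝ × ℝ} {I : Set ℝ} {t : ℝ}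
    (h : HasDerivWithinAt f w I t) : HasDerivWithinAt (fun s => (f s).2) w.2 I t := by
  simpa using (h.hasFDerivWithinAt.snd).hasDerivWithinAt

lemma sq_add_sq_ne (x y a : ℝ) (h : ¬ (x = a ∧ y = 0)) : (x - a) ^ 2 + y ^ 2 ≠ 0 := by
  intro h0
  apply h
  have h1 : (x - a) ^ 2 = 0 := le_antisymm (by nlinarith [sq_nonneg y]) (sq_nonneg _)
  have h2 : y ^ 2 = 0 := le_antisymm (by nlinarith [sq_nonneg (x - a)]) (sq_nonneg _)
  have h1' : x - a = 0 := pow_eq_zero_iff (by norm_num) |>.mp h1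
  have h2' : y = 0 := pow_eq_zero_iff (by norm_num) |>.mp h2
  exact ⟨by linarith, h2'⟩


lemma twoCenterOmega_deriv_zero (m₁ m₂ : ℝ) {I : Set ℝ} {q v : ℝ → ℝ × ℝ} {t : ℝ}
    (hne : q t ≠ ((1:ℝ), (0:ℝ))) (hne' : q t ≠ ((-1:ℝ), (0:ℝ)))
    (hdq : HasDerivWithinAt q (v t) I t)
    (hdv : HasDerivWithinAt v
      ((-(m₁ / Real.sqrt (((q t).1 - 1) ^ 2 + (q t).2 ^ 2) ^ 3))
          • (q t - ((1 : ℝ), (0 : ℝ)))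
        - (m₂ / Real.sqrt (((q t).1 + 1) ^ 2 + (q t).2 ^ 2) ^ 3)
          • (q t + ((1 : ℝ), (0 : ℝ)))) I t) :
    HasDerivWithinAt (fun s => twoCenterOmega m₁ m₂ (q s) (v s)) 0 I t := by
  have hup : (((q t).1 - 1) ^ 2 + (q t).2 ^ 2) ≠ 0 := by
    apply sq_add_sq_ne
    rintro ⟨h1, h2⟩
    exact hne (Prod.ext h1 h2)
  have hum : (((q t).1 + 1) ^ 2 + (q t).2 ^ 2) ≠ 0 := by
    have := sq_add_sq_ne ((q t).1) ((q t).2) (-1) (fun ⟨h1, h2⟩ => hne' (Prod.ext h1 h2))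
    simpa [sub_neg_eq_add] using this
  have hupPos : 0 < (((q t).1 - 1) ^ 2 + (q t).2 ^ 2) :=
    lt_of_le_of_ne (by positivity) (Ne.symm hup)
  have humPos : 0 < (((q t).1 + 1) ^ 2 + (q t).2 ^ 2) :=
    lt_of_le_of_ne (by positivity) (Ne.symm hum)
  have hrp : Real.sqrt (((q t).1 - 1) ^ 2 + (q t).2 ^ 2) ≠ 0 :=
    ne_of_gt (Real.sqrt_pos.mpr hupPos)
  have hrm : Real.sqrt (((q t).1 + 1) ^ 2 + (q t).2 ^ 2) ≠ 0 :=
    ne_of_gt (Real.sqrt_pos.mpr humPos)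
  -- component derivatives
  have hq1 := fstDeriv hdq
  have hq2 := sndDeriv hdq
  have hv1 := fstDeriv hdv
  have hv2 := sndDeriv hdv
  simp only [Prod.fst_sub, Prod.snd_sub, Prod.fst_add, Prod.snd_add, Prod.smul_fst,
    Prod.smul_snd, smul_eq_mul] at hv1 hv2
  -- u derivatives
  have hUp : HasDerivWithinAt (fun s => (((q s).1 - 1) ^ 2 + (q s).2 ^ 2))
      (2 * ((q t).1 - 1) * (v t).1 + 2 * (q t).2 * (v t).2) I t := by
    have := ((hq1.sub_const 1).pow 2).add (hq2.pow 2)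
    norm_num at this
    convert this using 1
    all_goals rfl
  have hUm : HasDerivWithinAt (fun s => (((q s).1 + 1) ^ 2 + (q s).2 ^ 2))
      (2 * ((q t).1 + 1) * (v t).1 + 2 * (q t).2 * (v t).2) I t := by
    have := ((hq1.add_const 1).pow 2).add (hq2.pow 2)
    norm_num at this
    convert this using 1
    all_goals rfl
  have hSp := hUp.sqrt hup
  have hSm := hUm.sqrt hum
  have hT1 : HasDerivWithinAt (fun s => 2 * m₁ * ((q s).1 - 1) /
      Real.sqrt (((q s).1 - 1) ^ 2 + (q s).2 ^ 2)) _ I t :=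
    ((hq1.sub_const 1).const_mul (2 * m₁)).div hSp hrp
  have hT2 : HasDerivWithinAt (fun s => 2 * m₂ * ((q s).1 + 1) /
      Real.sqrt (((q s).1 + 1) ^ 2 + (q s).2 ^ 2)) _ I t :=
    ((hq1.add_const 1).const_mul (2 * m₂)).div hSm hrm
  have hLp : HasDerivWithinAt (fun s => ((q s).1 - 1) * (v s).2 - (q s).2 * (v s).1) _ I t :=
    ((hq1.sub_const 1).mul hv2).sub (hq2.mul hv1)
  have hLm : HasDerivWithinAt (fun s => ((q s).1 + 1) * (v s).2 - (q s).2 * (v s).1) _ I t :=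
    ((hq1.add_const 1).mul hv2).sub (hq2.mul hv1)
  have H := ((hLp.mul hLm).sub hT1).add hT2
  simp only [twoCenterOmega]
  convert H using 1
  case e'_4 => rfl
  case e'_5 => rfl
  case e'_8 => rfl
  set x := (q t).1 with hxdef
  set y := (q t).2 with hydef
  set w := (v t).1 with hwdef
  set z := (v t).2 with hzdef
  set r := Real.sqrt ((x - 1) ^ 2 + y ^ 2) with hrdef
  set s := Real.sqrt ((x + 1) ^ 2 + y ^ 2) with hsdef
  have hr2 : r ^ 2 = (x - 1) ^ 2 + y ^ 2 := Real.sq_sqrt hupPos.le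
  have hs2 : s ^ 2 = (x + 1) ^ 2 + y ^ 2 := Real.sq_sqrt humPos.le
  field_simp
  linear_combination ((-2) * r * s ^ 2 * w * m₂ + 2 * r * x ^ 2 * w * m₂ + 4 * r * x * w * m₂ + 2 * r * y ^ 2 * w * m₂ + 2 * r * w * m₂ + 2 * s ^ 3 * w * m₁) * hr2 + ((-2) * r * x ^ 2 * w * m₂ + 4 * r * x * w * m₂ + (-2) * r * y ^ 2 * w * m₂ + (-2) * r * w * m₂) * hs2

set_option maxHeartbeats 1000000 in
/-- Euler's two-center problem with centers `(±1,0)` admits any combination of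
confocal ellipses `{q₁²/(b²+1) + q₂²/b² = 1}` and confocal hyperbolae
`{q₁²/A² − q₂²/B² = 1}` (A² + B² = 1), with foci at the two centers, as an integrable
reflection wall: `Ω` is constant along two-center trajectories and invariant under
elastic reflections at these conics. -/
theorem stmt_19 (m₁ m₂ : ℝ) :
    (∀ I : Set ℝ, Convex ℝ I → ∀ q v : ℝ → ℝ × ℝ,
      (∀ t ∈ I, q t ≠ ((1 : ℝ), (0 : ℝ)) ∧ q t ≠ ((-1 : ℝ), (0 : ℝ))) →
      (∀ t ∈ I, HasDerivWithinAt q (v t) I t) →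
      (∀ t ∈ I, HasDerivWithinAt v
        ((-(m₁ / Real.sqrt (((q t).1 - 1) ^ 2 + (q t).2 ^ 2) ^ 3))
            • (q t - ((1 : ℝ), (0 : ℝ)))
          - (m₂ / Real.sqrt (((q t).1 + 1) ^ 2 + (q t).2 ^ 2) ^ 3)
            • (q t + ((1 : ℝ), (0 : ℝ)))) I t) →
      ∀ t ∈ I, ∀ t' ∈ I,
        twoCenterOmega m₁ m₂ (q t) (v t) = twoCenterOmega m₁ m₂ (q t') (v t')) ∧
    (∀ b : ℝ, 0 < b → ∀ q p : ℝ × ℝ,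
      q.1 ^ 2 / (b ^ 2 + 1) + q.2 ^ 2 / b ^ 2 = 1 →
      ∀ n p' : ℝ × ℝ, n = (q.1 / (b ^ 2 + 1), q.2 / b ^ 2) →
      p' = p - (2 * ((p.1 * n.1 + p.2 * n.2) / (n.1 ^ 2 + n.2 ^ 2))) • n →
      twoCenterOmega m₁ m₂ q p' = twoCenterOmega m₁ m₂ q p) ∧
    (∀ A B : ℝ, 0 < A → 0 < B → A ^ 2 + B ^ 2 = 1 → ∀ q p : ℝ × ℝ,
      q ≠ ((1 : ℝ), (0 : ℝ)) → q ≠ ((-1 : ℝ), (0 : ℝ)) →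
      q.1 ^ 2 / A ^ 2 - q.2 ^ 2 / B ^ 2 = 1 →
      ∀ n p' : ℝ × ℝ, n = (q.1 / A ^ 2, -q.2 / B ^ 2) →
      p' = p - (2 * ((p.1 * n.1 + p.2 * n.2) / (n.1 ^ 2 + n.2 ^ 2))) • n →
      twoCenterOmega m₁ m₂ q p' = twoCenterOmega m₁ m₂ q p) := by
  refine ⟨?_, ?_, ?_⟩
  · intro I hI q v hqne hdq hdv t ht t' ht'
    have key : ∀ x ∈ I, HasDerivWithinAt (fun s => twoCenterOmega m₁ m₂ (q s) (v s))
        ((fun _ => (0:ℝ)) x) I x := fun x hx =>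
      twoCenterOmega_deriv_zero m₁ m₂ (hqne x hx).1 (hqne x hx).2 (hdq x hx) (hdv x hx)
    have hb := hI.norm_image_sub_le_of_norm_hasDerivWithin_le (C := 0) key
      (fun x _ => by simp) ht' ht
    simp only [zero_mul, norm_le_zero_iff, sub_eq_zero] at hb
    exact hb
  · intro b hb q p hconic n p' hn hp'
    subst hn; subst hp'
    simp only [twoCenterOmega]
    congr 1
    congr 1
    have hb2 : (b:ℝ)^2 ≠ 0 := by positivity
    have hb1 : (b:ℝ)^2 + 1 ≠ 0 := by positivity
    have hM : q.1 ^ 2 * (b ^ 2) ^ 2 + q.2 ^ 2 * (b ^ 2 + 1) ^ 2 ≠ 0 := by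
      intro h
      have hA : (0:ℝ) ≤ q.1 ^ 2 * (b ^ 2) ^ 2 := by positivity
      have hB : (0:ℝ) ≤ q.2 ^ 2 * (b ^ 2 + 1) ^ 2 := by positivity
      have hA0 : q.1 ^ 2 * (b ^ 2) ^ 2 = 0 := by linarith
      have hB0 : q.2 ^ 2 * (b ^ 2 + 1) ^ 2 = 0 := by linarith
      have hq1 : q.1 = 0 := by
        rcases mul_eq_zero.mp hA0 with h' | h'
        · exact pow_eq_zero_iff (by norm_num) |>.mp h'
        · exact absurd h' (by positivity)
      have hq2 : q.2 = 0 := by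
        rcases mul_eq_zero.mp hB0 with h' | h'
        · exact pow_eq_zero_iff (by norm_num) |>.mp h'
        · exact absurd h' (by positivity)
      rw [hq1, hq2] at hconic; norm_num at hconic
    have hE : q.1^2 * b^2 + q.2^2 * (b^2+1) = b^2 * (b^2+1) := by
      field_simp at hconic; linarith
    simp only [Prod.snd_sub, Prod.fst_sub, Prod.smul_fst, Prod.smul_snd, smul_eq_mul]
    have hM' : q.1 ^ 2 * b ^ 4 + (b ^ 2 + 1) ^ 2 * q.2 ^ 2 ≠ 0 := by convert hM using 1; ring
    field_simp [hM']
    linear_combination ((-4) * q.1 ^ 3 * q.2 * b ^ 4 * p.1 * p.2 + 4 * q.1 ^ 2 * q.2 ^ 2 * b ^ 4 * p.1 ^ 2 + (-4) * q.1 ^ 2 * q.2 ^ 2 * b ^ 4 * p.2 ^ 2 + 4 * q.1 ^ 2 * q.2 ^ 2 * b ^ 2 * p.1 ^ 2 + (-4) * q.1 ^ 2 * q.2 ^ 2 * b ^ 2 * p.2 ^ 2 + 4 * q.1 * q.2 ^ 3 * b ^ 4 * p.1 * p.2 + 8 * q.1 * q.2 ^ 3 * b ^ 2 * p.1 * p.2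 + 4 * q.1 * q.2 ^ 3 * p.1 * p.2) * hE
  · intro A B hA hB hAB q p hq1 hq2 hconic n p' hn hp'
    subst hn; subst hp'
    simp only [twoCenterOmega]
    congr 1
    congr 1
    have hA2 : A ^ 2 ≠ 0 := by positivity
    have hB2 : B ^ 2 ≠ 0 := by positivity
    have hM : q.1 ^ 2 * (B ^ 2) ^ 2 + q.2 ^ 2 * (A ^ 2) ^ 2 ≠ 0 := by
      intro h
      have h1 : (0:ℝ) ≤ q.1 ^ 2 * (B ^ 2) ^ 2 := by positivity
      have h2 : (0:ℝ) ≤ q.2 ^ 2 * (A ^ 2) ^ 2 := by positivity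
      have h10 : q.1 ^ 2 * (B ^ 2) ^ 2 = 0 := by linarith
      have h20 : q.2 ^ 2 * (A ^ 2) ^ 2 = 0 := by linarith
      have hq1 : q.1 = 0 := by
        rcases mul_eq_zero.mp h10 with h' | h'
        · exact pow_eq_zero_iff (by norm_num) |>.mp h'
        · exact absurd h' (by positivity)
      have hq2 : q.2 = 0 := by
        rcases mul_eq_zero.mp h20 with h' | h'
        · exact pow_eq_zero_iff (by norm_num) |>.mp h'
        · exact absurd h' (by positivity)
      rw [hq1, hq2] at hconic; norm_num at hconic
    have hE : q.1 ^ 2 * B ^ 2 - q.2 ^ 2 * A ^ 2 = A ^ 2 * B ^ 2 := by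
      field_simp at hconic; linarith
    simp only [Prod.snd_sub, Prod.fst_sub, Prod.smul_fst, Prod.smul_snd, smul_eq_mul]
    have hM' : q.1 ^ 2 * B ^ 4 + A ^ 4 * q.2 ^ 2 ≠ 0 := by convert hM using 1; ring
    field_simp [hM']
    linear_combination (4 * q.1 ^ 3 * q.2 * A ^ 4 * p.1 * p.2 + (-8) * q.1 ^ 3 * q.2 * A ^ 2 * p.1 * p.2 + 4 * q.1 ^ 3 * q.2 * p.1 * p.2 + (-4) * q.1 ^ 2 * q.2 ^ 2 * A ^ 4 * p.1 ^ 2 + 4 * q.1 ^ 2 * q.2 ^ 2 * A ^ 4 * p.2 ^ 2 + 4 * q.1 ^ 2 * q.2 ^ 2 * A ^ 2 * p.1 ^ 2 + (-4) * q.1 ^ 2 * q.2 ^ 2 * A ^ 2 * p.2 ^ 2 + (-4) * q.1 * q.2 ^ 3 * A ^ 4 * p.1 * p.2) * hE + (4 * B ^ 6 * q.1 ^ 5 * q.2 * p.1 * p.2 + 4 * B ^ 4 * q.1 ^ 5 * q.2 * p.1 * p.2 + 4 * B ^ 4 * q.1 ^ 4 * q.2 ^ 2 * A ^ 2 * p.1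 ^ 2 + (-4) * B ^ 4 * q.1 ^ 4 * q.2 ^ 2 * A ^ 2 * p.2 ^ 2 + (-4) * B ^ 4 * q.1 ^ 3 * q.2 ^ 3 * A ^ 2 * p.1 * p.2 + (-4) * B ^ 4 * q.1 ^ 3 * q.2 * A ^ 2 * p.1 * p.2 + (-4) * B ^ 2 * q.1 ^ 5 * q.2 * A ^ 2 * p.1 * p.2 + 4 * B ^ 2 * q.1 ^ 5 * q.2 * p.1 * p.2 + 4 * B ^ 2 * q.1 ^ 4 * q.2 ^ 2 * A ^ 2 * p.1 ^ 2 + (-4) * B ^ 2 * q.1 ^ 4 * q.2 ^ 2 * A ^ 2 * p.2 ^ 2 + (-4) * B ^ 2 * q.1 ^ 3 * q.2 ^ 3 * A ^ 4 * p.1 * p.2 + (-4) * B ^ 2 * q.1 ^ 3 * q.2 ^ 3 * A ^ 2 * p.1 * p.2 + 4 * B ^ 2 * q.1 ^ 3 * q.2 * A ^ 4 * p.1 * p.2 + (-4) * B ^ 2 * q.1 ^ 3 * q.2 * A ^ 2 * p.1 * p.2 + (-4) * B ^ 2 * q.1 ^ 2 * q.2 ^ 4 * A ^ 4 * p.1 ^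 2 + 4 * B ^ 2 * q.1 ^ 2 * q.2 ^ 4 * A ^ 4 * p.2 ^ 2 + (-4) * B ^ 2 * q.1 ^ 2 * q.2 ^ 2 * A ^ 4 * p.1 ^ 2 + 4 * B ^ 2 * q.1 ^ 2 * q.2 ^ 2 * A ^ 4 * p.2 ^ 2 + 4 * q.1 ^ 3 * q.2 ^ 3 * A ^ 4 * p.1 * p.2 + (-4) * q.1 ^ 3 * q.2 ^ 3 * A ^ 2 * p.1 * p.2 + (-4) * q.1 ^ 2 * q.2 ^ 4 * A ^ 4 * p.1 ^ 2 + 4 * q.1 ^ 2 * q.2 ^ 4 * A ^ 4 * p.2 ^ 2 + 4 * q.1 * q.2 ^ 5 * A ^ 6 * p.1 * p.2) * hAB
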